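/- Let U ∈ R^{n1×r} and V ∈ R^{n2×r} have orthonormal columns, let Ũ ∈ R^{n1×(n1−r)} have orthonormal columns spanning the orthogonal complement of the column space of U, let Q ∈ R^{r×r} have smallest singular value σ_r > 0, and set X = U Q V^T. Let Û ∈ R^{n1×r} and V̂ ∈ R^{n2×r} have orthonormal columns and Σ̂ ∈ R^{r×r} be arbitrary. Then ‖Ũ^T Û‖_F ≤ (1/σ_r)·‖X − Û Σ̂ V̂^T‖_F; likewise, with Ṽ the orthonormal complement of V, ‖Ṽ^T V̂‖_F ≤ (1/σ_r)·‖X − Û Σ̂ V̂^T‖_F. -/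

import Mathlib

open Matrix

/-- The Frobenius norm of a real matrix. -/
noncomputable def frobNorm {n1 n2 : ℕ} (M : Matrix (Fin n1) (Fin n2) ℝ) : ℝ :=
  Real.sqrt (∑ i, ∑ j, (M i j) ^ 2)

/-- The Euclidean (ℓ²) norm of a vector in `ℝ^n`. -/
noncomputable def l2norm {n : ℕ} (v : Fin n → ℝ) : ℝ :=
  Real.sqrt (∑ i, (v i) ^ 2)

namespace Stmt5Aux

noncomputable def sqnorm {n : ℕ} (v : Fin n → ℝ) : ℝ := ∑ i, (v i) ^ 2

noncomputable def FS {m n : ℕ} (M : Matrix (Fin m) (Fin n) ℝ) : ℝ := ∑ i, ∑ j, (M i j) ^ 2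

lemma sqnorm_nonneg {n : ℕ} (v : Fin n → ℝ) : 0 ≤ sqnorm v :=
  Finset.sum_nonneg fun _ _ => sq_nonneg _

lemma FS_nonneg {m n : ℕ} (M : Matrix (Fin m) (Fin n) ℝ) : 0 ≤ FS M :=
  Finset.sum_nonneg fun _ _ => Finset.sum_nonneg fun _ _ => sq_nonneg _

lemma FS_eq_trace {m n : ℕ} (M : Matrix (Fin m) (Fin n) ℝ) :
    FS M = Matrix.trace (M * Mᵀ) := by
  simp [FS, Matrix.trace, Matrix.mul_apply, Matrix.diag, sq]

lemma FS_transpose {m n : ℕ} (M : Matrix (Fin m) (Fin n) ℝ) : FS Mᵀ = FS M := by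
  rw [FS_eq_trace, FS_eq_trace, Matrix.transpose_transpose, Matrix.trace_mul_comm]

lemma FS_mul_left {k m n : ℕ} (W : Matrix (Fin k) (Fin m) ℝ) (hW : Wᵀ * W = 1)
    (A : Matrix (Fin m) (Fin n) ℝ) : FS (W * A) = FS A := by
  rw [FS_eq_trace, FS_eq_trace]
  have h1 : (W * A) * (W * A)ᵀ = W * (A * Aᵀ * Wᵀ) := by
    rw [Matrix.transpose_mul]
    simp only [Matrix.mul_assoc]
  rw [h1, Matrix.trace_mul_comm, Matrix.mul_assoc (A * Aᵀ) Wᵀ W, hW, Matrix.mul_one]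

lemma FS_mul_right {k m n : ℕ} (V : Matrix (Fin k) (Fin n) ℝ) (hV : Vᵀ * V = 1)
    (A : Matrix (Fin m) (Fin n) ℝ) : FS (A * Vᵀ) = FS A := by
  rw [← FS_transpose (A * Vᵀ), Matrix.transpose_mul, Matrix.transpose_transpose,
    FS_mul_left V hV, FS_transpose]

lemma FS_proj_right {m n r : ℕ} (Bh : Matrix (Fin n) (Fin r) ℝ) (hBh : Bhᵀ * Bh = 1)
    (A : Matrix (Fin m) (Fin n) ℝ) :
    FS (A * ((1 : Matrix (Fin n) (Fin n) ℝ) - Bh * Bhᵀ)) ≤ FS A := by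
  set P : Matrix (Fin n) (Fin n) ℝ := 1 - Bh * Bhᵀ with hP
  have hPt : Pᵀ = P := by
    simp [hP, Matrix.transpose_sub, Matrix.transpose_mul]
  have hNN : (Bh * Bhᵀ) * (Bh * Bhᵀ) = Bh * Bhᵀ := by
    rw [Matrix.mul_assoc, ← Matrix.mul_assoc Bhᵀ, hBh, Matrix.one_mul]
  have hPP : P * P = P := by
    simp only [hP, Matrix.sub_mul, Matrix.mul_sub, Matrix.one_mul, Matrix.mul_one, hNN]
    abel
  have hsplit : FS A = FS (A * P) + FS (A * Bh) := by
    rw [FS_eq_trace, FS_eq_trace, FS_eq_trace]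
    have e1 : (A * P) * (A * P)ᵀ = A * P * Aᵀ := by
      rw [Matrix.transpose_mul, hPt, ← Matrix.mul_assoc, Matrix.mul_assoc A P P, hPP]
    have e2 : (A * Bh) * (A * Bh)ᵀ = A * (Bh * Bhᵀ) * Aᵀ := by
      rw [Matrix.transpose_mul]
      simp only [Matrix.mul_assoc]
    rw [e1, e2, ← Matrix.trace_add]
    congr 1
    have : A * P * Aᵀ + A * (Bh * Bhᵀ) * Aᵀ = A * (P + Bh * Bhᵀ) * Aᵀ := by
      rw [Matrix.mul_add, Matrix.add_mul]
    rw [this, hP, sub_add_cancel, Matrix.mul_one]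
  have := FS_nonneg (A * Bh)
  linarith

lemma FS_col {m n : ℕ} (M : Matrix (Fin m) (Fin n) ℝ) :
    FS M = ∑ j, sqnorm (fun i => M i j) := by
  rw [FS, Finset.sum_comm]; rfl

lemma FS_Q_left {r n : ℕ} (Q : Matrix (Fin r) (Fin r) ℝ) (σ : ℝ)
    (hQ : ∀ w : Fin r → ℝ, σ ^ 2 * sqnorm w ≤ sqnorm (Q *ᵥ w))
    (B : Matrix (Fin r) (Fin n) ℝ) : σ ^ 2 * FS B ≤ FS (Q * B) := by
  rw [FS_col, FS_col, Finset.mul_sum]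
  apply Finset.sum_le_sum
  intro j _
  have h := hQ (fun k => B k j)
  have e : (fun i => (Q * B) i j) = Q *ᵥ (fun k => B k j) := by
    funext i
    simp [Matrix.mul_apply, Matrix.mulVec, dotProduct]
  rw [e]
  exact h

lemma l2_sq {n : ℕ} (v : Fin n → ℝ) : (l2norm v) ^ 2 = sqnorm v :=
  Real.sq_sqrt (sqnorm_nonneg v)

/-- Homogenized lower bound from the unit-vector characterization. -/
lemma hQ_of_min {r : ℕ} (Q : Matrix (Fin r) (Fin r) ℝ) (σ : ℝ) (hσ : 0 < σ)
    (hmin : ∀ v : Fin r → ℝ, l2norm v = 1 → σ ≤ l2norm (Q *ᵥ v)) :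
    ∀ w : Fin r → ℝ, σ ^ 2 * sqnorm w ≤ sqnorm (Q *ᵥ w) := by
  intro w
  by_cases hw : w = 0
  · simp [hw, sqnorm, Matrix.mulVec_zero]
  · have hsw : 0 < sqnorm w := by
      rcases lt_or_eq_of_le (sqnorm_nonneg w) with h | h
      · exact h
      · exfalso; apply hw
        funext i
        have hz : ∀ i ∈ Finset.univ, (0:ℝ) ≤ (w i)^2 := fun _ _ => sq_nonneg _
        have := (Finset.sum_eq_zero_iff_of_nonneg hz).1 h.symm i (Finset.mem_univ i)
        exact pow_eq_zero_iff (n := 2) (by norm_num) |>.1 this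
    have hc : 0 < l2norm w := Real.sqrt_pos.2 hsw
    set c := l2norm w with hcdef
    have hunit : l2norm (c⁻¹ • w) = 1 := by
      have : sqnorm (c⁻¹ • w) = c⁻¹ ^ 2 * sqnorm w := by
        simp [sqnorm, mul_pow, Finset.mul_sum]
      rw [l2norm, ← sqnorm, this, ← l2_sq w]
      rw [Real.sqrt_mul (by positivity), Real.sqrt_sq (by positivity), Real.sqrt_sq hc.le]
      field_simp
    have h1 := hmin _ hunit
    have h2 : Q *ᵥ (c⁻¹ • w) = c⁻¹ • (Q *ᵥ w) := by
      rw [Matrix.mulVec_smul]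
    rw [h2] at h1
    have h3 : l2norm (c⁻¹ • (Q *ᵥ w)) = c⁻¹ * l2norm (Q *ᵥ w) := by
      rw [l2norm, l2norm]
      have : ∑ i, ((c⁻¹ • (Q *ᵥ w)) i)^2 = c⁻¹^2 * ∑ i, ((Q *ᵥ w) i)^2 := by
        simp [mul_pow, Finset.mul_sum]
      rw [this, Real.sqrt_mul (by positivity), Real.sqrt_sq (by positivity)]
    rw [h3] at h1
    have h4 : σ * c ≤ l2norm (Q *ᵥ w) := by
      have h := mul_le_mul_of_nonneg_left h1 hc.le
      rw [← mul_assoc, mul_inv_cancel₀ hc.ne', one_mul] at h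
      linarith
    have h5 : (σ * c) ^ 2 ≤ (l2norm (Q *ᵥ w)) ^ 2 := by
      apply pow_le_pow_left₀ (by positivity) h4
    rw [l2_sq] at h5
    calc σ ^ 2 * sqnorm w = (σ * c)^2 := by rw [mul_pow, hcdef, l2_sq]
      _ ≤ sqnorm (Q *ᵥ w) := h5

/-- Transpose also satisfies the lower bound. -/
lemma hQ_transpose {r : ℕ} (Q : Matrix (Fin r) (Fin r) ℝ) (σ : ℝ) (hσ : 0 < σ)
    (hQ : ∀ w : Fin r → ℝ, σ ^ 2 * sqnorm w ≤ sqnorm (Q *ᵥ w)) :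
    ∀ v : Fin r → ℝ, σ ^ 2 * sqnorm v ≤ sqnorm (Qᵀ *ᵥ v) := by
  have hinj : Function.Injective Q.mulVecLin := by
    rw [← LinearMap.ker_eq_bot, LinearMap.ker_eq_bot']
    intro w hw
    have h0 : sqnorm (Q *ᵥ w) = 0 := by
      have : Q *ᵥ w = 0 := hw
      simp [this, sqnorm]
    have := hQ w
    rw [h0] at this
    have hsw : sqnorm w = 0 :=
      le_antisymm (by nlinarith [pow_pos hσ 2]) (sqnorm_nonneg w)
    funext i
    have hz : ∀ i ∈ Finset.univ, (0:ℝ) ≤ (w i)^2 := fun _ _ => sq_nonneg _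
    have := (Finset.sum_eq_zero_iff_of_nonneg hz).1 hsw i (Finset.mem_univ i)
    simpa using pow_eq_zero_iff (n := 2) (by norm_num) |>.1 this
  have hsurj : Function.Surjective Q.mulVecLin := LinearMap.surjective_of_injective hinj
  intro v
  obtain ⟨u, hu⟩ := hsurj v
  have hu' : Q *ᵥ u = v := hu
  have hkey : sqnorm v = (Qᵀ *ᵥ v) ⬝ᵥ u := by
    have e1 : sqnorm v = v ⬝ᵥ (Q *ᵥ u) := by
      rw [hu']; simp [sqnorm, dotProduct, sq]
    rw [e1, Matrix.dotProduct_mulVec, ← Matrix.mulVec_transpose]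
  have hCS : (sqnorm v) ^ 2 ≤ sqnorm (Qᵀ *ᵥ v) * sqnorm u := by
    rw [hkey]
    simpa [dotProduct, sqnorm] using
      Finset.sum_mul_sq_le_sq_mul_sq Finset.univ (fun i => (Qᵀ *ᵥ v) i) u
  have hub : σ ^ 2 * sqnorm u ≤ sqnorm v := by rw [← hu']; exact hQ u
  by_cases hv : sqnorm v = 0
  · rw [hv]; simpa using sqnorm_nonneg (Qᵀ *ᵥ v)
  · have hv' : 0 < sqnorm v := lt_of_le_of_ne (sqnorm_nonneg v) (Ne.symm hv)
    nlinarith [sqnorm_nonneg (Qᵀ *ᵥ v), sqnorm_nonneg u, sq_nonneg σ, mul_pos (mul_pos hσ hσ) hv']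

/-- Completeness of an orthonormal complement basis. -/
lemma compl_one {n r : ℕ} (hr : r ≤ n)
    (B : Matrix (Fin n) (Fin r) ℝ) (Bt : Matrix (Fin n) (Fin (n - r)) ℝ)
    (hB : Bᵀ * B = 1) (hBt : Btᵀ * Bt = 1) (hperp : Bᵀ * Bt = 0) :
    B * Bᵀ + Bt * Btᵀ = 1 := by
  have e : Fin n ≃ Fin r ⊕ Fin (n - r) :=
    (finCongr (by omega : n = r + (n - r))).trans finSumFinEquiv.symm
  have hperp' : Btᵀ * B = 0 := by
    have := congrArg Matrix.transpose hperp
    simpa using this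
  have h1 : fromRows Bᵀ Btᵀ * fromCols B Bt = 1 := by
    rw [Matrix.fromRows_mul_fromCols, hB, hBt, hperp, hperp', Matrix.fromBlocks_one]
  have h2 : fromCols B Bt * fromRows Bᵀ Btᵀ = 1 :=
    (Matrix.fromCols_mul_fromRows_eq_one_comm e B Bt Bᵀ Btᵀ).2 h1
  rwa [Matrix.fromCols_mul_fromRows] at h2

lemma FS_compl {n r : ℕ} (hr : r ≤ n)
    (B : Matrix (Fin n) (Fin r) ℝ) (Bt : Matrix (Fin n) (Fin (n - r)) ℝ)
    (Bh : Matrix (Fin n) (Fin r) ℝ)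
    (hB : Bᵀ * B = 1) (hBt : Btᵀ * Bt = 1) (hperp : Bᵀ * Bt = 0) (hBh : Bhᵀ * Bh = 1) :
    FS (Bᵀ * ((1 : Matrix (Fin n) (Fin n) ℝ) - Bh * Bhᵀ)) = FS (Btᵀ * Bh) := by
  have hcompl := compl_one hr B Bt hB hBt hperp
  set N : Matrix (Fin n) (Fin n) ℝ := Bh * Bhᵀ with hN
  set P : Matrix (Fin n) (Fin n) ℝ := 1 - N with hP
  have hPt : Pᵀ = P := by simp [hP, hN, Matrix.transpose_sub, Matrix.transpose_mul]
  have hNN : N * N = N := by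
    rw [hN, Matrix.mul_assoc, ← Matrix.mul_assoc Bhᵀ, hBh, Matrix.one_mul]
  have hPP : P * P = P := by
    simp only [hP, Matrix.sub_mul, Matrix.mul_sub, Matrix.one_mul, Matrix.mul_one, hNN]
    abel
  have lhs_eq : FS (Bᵀ * P) =
      Matrix.trace (1 : Matrix (Fin r) (Fin r) ℝ) - FS (Bᵀ * Bh) := by
    rw [FS_eq_trace]
    have key : (Bᵀ * P) * (Bᵀ * P)ᵀ = 1 - (Bᵀ * Bh) * (Bᵀ * Bh)ᵀ := by
      rw [Matrix.transpose_mul, hPt, Matrix.transpose_transpose, Matrix.transpose_mul,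
        Matrix.transpose_transpose]
      rw [← Matrix.mul_assoc (Bᵀ * P) P B, Matrix.mul_assoc Bᵀ P P, hPP, hP, hN]
      rw [Matrix.mul_sub, Matrix.mul_one, Matrix.sub_mul, hB]
      simp only [Matrix.mul_assoc]
    rw [key, Matrix.trace_sub, ← FS_eq_trace]
  have rhs_eq : FS (Btᵀ * Bh) =
      Matrix.trace (1 : Matrix (Fin r) (Fin r) ℝ) - FS (Bᵀ * Bh) := by
    rw [FS_eq_trace]
    have e0 : (Btᵀ * Bh) * (Btᵀ * Bh)ᵀ = (Btᵀ * Bh) * (Bhᵀ * Bt) := by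
      rw [Matrix.transpose_mul, Matrix.transpose_transpose]
    have hBtBt : Bt * Btᵀ = 1 - B * Bᵀ := by
      rw [eq_sub_iff_add_eq, add_comm]
      exact hcompl
    have key : (Bhᵀ * Bt) * (Btᵀ * Bh) = 1 - (Bᵀ * Bh)ᵀ * (Bᵀ * Bh) := by
      calc (Bhᵀ * Bt) * (Btᵀ * Bh) = Bhᵀ * (Bt * Btᵀ) * Bh := by
            simp only [Matrix.mul_assoc]
        _ = Bhᵀ * (1 - B * Bᵀ) * Bh := by rw [hBtBt]
        _ = 1 - Bhᵀ * B * (Bᵀ * Bh) := by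
            rw [Matrix.mul_sub, Matrix.mul_one, Matrix.sub_mul, hBh]
            simp only [Matrix.mul_assoc]
        _ = 1 - (Bᵀ * Bh)ᵀ * (Bᵀ * Bh) := by
            rw [Matrix.transpose_mul, Matrix.transpose_transpose, Matrix.mul_assoc]
    rw [e0, Matrix.trace_mul_comm, key, Matrix.trace_sub, Matrix.trace_mul_comm, ← FS_eq_trace]
  rw [lhs_eq, rhs_eq]

lemma master {n1 n2 r : ℕ} (hr2 : r ≤ n2)
    (A : Matrix (Fin n1) (Fin r) ℝ) (hA : Aᵀ * A = 1)
    (B : Matrix (Fin n2) (Fin r) ℝ) (hB : Bᵀ * B = 1)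
    (Bt : Matrix (Fin n2) (Fin (n2 - r)) ℝ) (hBt : Btᵀ * Bt = 1) (hperp : Bᵀ * Bt = 0)
    (Q : Matrix (Fin r) (Fin r) ℝ) (σ : ℝ)
    (hQ : ∀ w : Fin r → ℝ, σ ^ 2 * sqnorm w ≤ sqnorm (Q *ᵥ w))
    (C : Matrix (Fin n1) (Fin r) ℝ)
    (Bh : Matrix (Fin n2) (Fin r) ℝ) (hBh : Bhᵀ * Bh = 1)
    (S : Matrix (Fin r) (Fin r) ℝ) :
    σ ^ 2 * FS (Btᵀ * Bh) ≤ FS (A * Q * Bᵀ - C * S * Bhᵀ) := by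
  set P : Matrix (Fin n2) (Fin n2) ℝ := 1 - Bh * Bhᵀ with hP
  have hBhP : Bhᵀ * P = 0 := by
    rw [hP, Matrix.mul_sub, Matrix.mul_one, ← Matrix.mul_assoc, hBh, Matrix.one_mul, sub_self]
  have hEP : (A * Q * Bᵀ - C * S * Bhᵀ) * P = A * (Q * (Bᵀ * P)) := by
    rw [Matrix.sub_mul, Matrix.mul_assoc (C * S) Bhᵀ P, hBhP, Matrix.mul_zero, sub_zero]
    simp only [Matrix.mul_assoc]
  calc σ ^ 2 * FS (Btᵀ * Bh) = σ ^ 2 * FS (Bᵀ * P) := by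
        rw [FS_compl hr2 B Bt Bh hB hBt hperp hBh]
    _ ≤ FS (Q * (Bᵀ * P)) := FS_Q_left Q σ hQ _
    _ = FS (A * (Q * (Bᵀ * P))) := (FS_mul_left A hA _).symm
    _ = FS ((A * Q * Bᵀ - C * S * Bhᵀ) * P) := by rw [hEP]
    _ ≤ FS (A * Q * Bᵀ - C * S * Bhᵀ) := FS_proj_right Bh hBh _

lemma final_bound {m n p q : ℕ} {σ : ℝ} (hσ : 0 < σ)
    {M : Matrix (Fin m) (Fin n) ℝ} {E : Matrix (Fin p) (Fin q) ℝ}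
    (h : σ ^ 2 * FS M ≤ FS E) :
    Real.sqrt (FS M) ≤ (1 / σ) * Real.sqrt (FS E) := by
  have h1 : Real.sqrt (σ ^ 2 * FS M) ≤ Real.sqrt (FS E) := Real.sqrt_le_sqrt h
  rw [Real.sqrt_mul (sq_nonneg σ), Real.sqrt_sq hσ.le] at h1
  calc Real.sqrt (FS M) = (σ * Real.sqrt (FS M)) / σ := by field_simp
    _ ≤ Real.sqrt (FS E) / σ := by gcongr
    _ = (1 / σ) * Real.sqrt (FS E) := by ring

end Stmt5Aux

/-- Lemma 4 of the paper (subspace perturbation bound): if `X = U Q Vᵀ` where `U, V` have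
orthonormal columns and the smallest singular value of `Q` is `σr > 0` (characterized as the
least value of `‖Q v‖₂` over unit vectors `v`), and if `Ũ` (resp. `Ṽ`) has orthonormal columns
spanning the orthogonal complement of the column space of `U` (resp. `V`), then for any
`Û, V̂` with orthonormal columns and any `Σ̂`,
`‖Ũᵀ Û‖_F ≤ (1/σr)·‖X − Û Σ̂ V̂ᵀ‖_F` and `‖Ṽᵀ V̂‖_F ≤ (1/σr)·‖X − Û Σ̂ V̂ᵀ‖_F`. -/
theorem stmt5 {n1 n2 r : ℕ} (hr1 : r ≤ n1) (hr2 : r ≤ n2)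
    (U : Matrix (Fin n1) (Fin r) ℝ) (hU : Uᵀ * U = 1)
    (V : Matrix (Fin n2) (Fin r) ℝ) (hV : Vᵀ * V = 1)
    (Ut : Matrix (Fin n1) (Fin (n1 - r)) ℝ) (hUt : Utᵀ * Ut = 1) (hUperp : Uᵀ * Ut = 0)
    (Vt : Matrix (Fin n2) (Fin (n2 - r)) ℝ) (hVt : Vtᵀ * Vt = 1) (hVperp : Vᵀ * Vt = 0)
    (Q : Matrix (Fin r) (Fin r) ℝ) (σr : ℝ) (hσr : 0 < σr)
    (hσr_min : IsLeast {t | ∃ v : Fin r → ℝ, l2norm v = 1 ∧ t = l2norm (Q *ᵥ v)} σr)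
    (Uh : Matrix (Fin n1) (Fin r) ℝ) (hUh : Uhᵀ * Uh = 1)
    (Vh : Matrix (Fin n2) (Fin r) ℝ) (hVh : Vhᵀ * Vh = 1)
    (Sh : Matrix (Fin r) (Fin r) ℝ) :
    frobNorm (Utᵀ * Uh) ≤ (1 / σr) * frobNorm (U * Q * Vᵀ - Uh * Sh * Vhᵀ) ∧
    frobNorm (Vtᵀ * Vh) ≤ (1 / σr) * frobNorm (U * Q * Vᵀ - Uh * Sh * Vhᵀ) := by
  have hmin : ∀ v : Fin r → ℝ, l2norm v = 1 → σr ≤ l2norm (Q *ᵥ v) := fun v hv =>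
    hσr_min.2 ⟨v, hv, rfl⟩
  have hQv := Stmt5Aux.hQ_of_min Q σr hσr hmin
  have hQt := Stmt5Aux.hQ_transpose Q σr hσr hQv
  have hVpart := Stmt5Aux.master hr2 U hU V hV Vt hVt hVperp Q σr hQv Uh Vh hVh Sh
  have hUpart := Stmt5Aux.master hr1 V hV U hU Ut hUt hUperp Qᵀ σr hQt Vh Uh hUh Shᵀ
  have hEt : V * Qᵀ * Uᵀ - Vh * Shᵀ * Uhᵀ = (U * Q * Vᵀ - Uh * Sh * Vhᵀ)ᵀ := by
    rw [Matrix.transpose_sub, Matrix.transpose_mul, Matrix.transpose_mul,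
      Matrix.transpose_mul, Matrix.transpose_mul, Matrix.transpose_transpose,
      Matrix.transpose_transpose]
    simp only [Matrix.mul_assoc]
  rw [hEt, Stmt5Aux.FS_transpose] at hUpart
  exact ⟨Stmt5Aux.final_bound hσr hUpart, Stmt5Aux.final_bound hσr hVpart⟩
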